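/- Lower comparison lemma on level sets of real trees: Let (T,d,ρ) be a compact rooted real tree, a ∈ (0,∞) with T(a) nonempty, g an increasing continuous gauge with g(0)=0, μ a finite Borel measure on T with μ(T∖T(a))=0, A ⊂ T(a) Borel, and c ∈ (0,∞). If for every σ ∈ A one has limsup_{r→0} μ(B(σ,r))/g(r) > c, then μ(A) ≥ c·H_g(A), with no multiplicative correction constant. -/

import Mathlib

/-- A (rooted) real tree structure on a metric space `T`, given by the assignment
`seg x y` of the unique geodesic arc joining `x` to `y`:
(i) there is an isometric parametrization of `seg x y` by `[0, dist x y]` with the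
correct endpoints; (ii) any continuous injective arc from `x` to `y` has image `seg x y`. -/
structure IsRealTree {T : Type*} [MetricSpace T] (seg : T → T → Set T) : Prop where
  geodesic : ∀ x y : T, ∃ f : ℝ → T, f 0 = x ∧ f (dist x y) = y ∧
    (∀ s ∈ Set.Icc (0:ℝ) (dist x y), ∀ t ∈ Set.Icc (0:ℝ) (dist x y),
      dist (f s) (f t) = |s - t|) ∧ seg x y = f '' Set.Icc 0 (dist x y)
  unique_arc : ∀ x y : T, ∀ q : ℝ → T, ContinuousOn q (Set.Icc 0 1) →
    Set.InjOn q (Set.Icc 0 1) → q 0 = x → q 1 = y →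
    q '' Set.Icc 0 1 = seg x y

open Set

open Set

lemma iso_cont {T : Type*} [MetricSpace T] {f : ℝ → T} {d : ℝ}
    (hfi : ∀ s ∈ Set.Icc (0:ℝ) d, ∀ t ∈ Set.Icc (0:ℝ) d, dist (f s) (f t) = |s - t|) :
    ContinuousOn f (Set.Icc 0 d) := by
  refine LipschitzOnWith.continuousOn (K := 1) ?_
  refine LipschitzOnWith.of_dist_le_mul fun s hs t ht => ?_
  rw [hfi s hs t ht, Real.dist_eq]
  simp

lemma geo_coincide {T : Type*} [MetricSpace T] {seg : T → T → Set T}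
    (htree : IsRealTree seg) (ρ x y : T) (f g : ℝ → T)
    (hf0 : f 0 = ρ)
    (hfi : ∀ s ∈ Set.Icc (0:ℝ) (dist ρ x), ∀ t ∈ Set.Icc (0:ℝ) (dist ρ x),
      dist (f s) (f t) = |s - t|)
    (hg0 : g 0 = ρ)
    (hgi : ∀ s ∈ Set.Icc (0:ℝ) (dist ρ y), ∀ t ∈ Set.Icc (0:ℝ) (dist ρ y),
      dist (g s) (g t) = |s - t|)
    {s : ℝ} (hs0 : 0 ≤ s) (hsx : s ≤ dist ρ x) (hsy : s ≤ dist ρ y)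
    (hfg : f s = g s) {t : ℝ} (ht0 : 0 ≤ t) (hts : t ≤ s) : f t = g t := by
  rcases eq_or_lt_of_le hs0 with rfl | hs
  · have : t = 0 := le_antisymm hts ht0
    rw [this]; exact hfg
  -- parametrize both restricted geodesics on [0,1]
  have hsx' : s ∈ Icc (0:ℝ) (dist ρ x) := ⟨hs0, hsx⟩
  have hsy' : s ∈ Icc (0:ℝ) (dist ρ y) := ⟨hs0, hsy⟩
  have hmapsf : ∀ u ∈ Icc (0:ℝ) 1, s * u ∈ Icc (0:ℝ) (dist ρ x) := by
    intro u hu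
    constructor
    · exact mul_nonneg hs0 hu.1
    · calc s * u ≤ s * 1 := by nlinarith [hu.2, hs.le]
        _ = s := mul_one s
        _ ≤ _ := hsx
  have hmapsg : ∀ u ∈ Icc (0:ℝ) 1, s * u ∈ Icc (0:ℝ) (dist ρ y) := by
    intro u hu
    constructor
    · exact mul_nonneg hs0 hu.1
    · calc s * u ≤ s * 1 := by nlinarith [hu.2, hs.le]
        _ = s := mul_one s
        _ ≤ _ := hsy
  have key : ∀ (d : ℝ) (F : ℝ → T), F 0 = ρ →
      (∀ s' ∈ Icc (0:ℝ) d, ∀ t' ∈ Icc (0:ℝ) d, dist (F s') (F t') = |s' - t'|) →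
      s ≤ d → (fun u => F (s * u)) '' Icc 0 1 = seg ρ (F s) := by
    intro d F hF0 hFi hsd
    have hmaps : ∀ u ∈ Icc (0:ℝ) 1, s * u ∈ Icc (0:ℝ) d := by
      intro u hu
      exact ⟨mul_nonneg hs0 hu.1, by nlinarith [hu.1, hu.2]⟩
    refine htree.unique_arc ρ (F s) _ ?_ ?_ ?_ ?_
    · refine (iso_cont hFi).comp (by fun_prop) ?_
      intro u hu; exact hmaps u hu
    · intro u hu v hv huv
      have huv' : F (s*u) = F (s*v) := huv
      have := hFi (s*u) (hmaps u hu) (s*v) (hmaps v hv)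
      rw [huv'] at this
      simp only [dist_self] at this
      have : s * u = s * v := by
        have h2 := abs_eq_zero.mp this.symm
        linarith
      exact mul_left_cancel₀ hs.ne' this
    · simpa using hF0
    · simp
  have h1 := key (dist ρ x) f hf0 hfi hsx
  have h2 := key (dist ρ y) g hg0 hgi hsy
  rw [hfg] at h1
  -- f t is in the image of the f-param
  have htmem : f t ∈ (fun u => g (s * u)) '' Icc 0 1 := by
    rw [h2, ← h1]
    exact ⟨t / s, ⟨div_nonneg ht0 hs0, by rw [div_le_one hs]; exact hts⟩,
      by show f (s * (t/s)) = f t; rw [mul_div_cancel₀ _ hs.ne']⟩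
  obtain ⟨u, hu, hgu'⟩ := htmem
  have hgu : g (s * u) = f t := hgu'
  -- distances to ρ identify the parameter
  have hdx : dist ρ (f t) = t := by
    have := hfi 0 ⟨le_refl 0, dist_nonneg⟩ t ⟨ht0, le_trans hts hsx⟩
    rw [hf0] at this
    rw [this, abs_of_nonpos (by linarith), neg_sub, sub_zero]
  have hdy : dist ρ (g (s * u)) = s * u := by
    have := hgi 0 ⟨le_refl 0, dist_nonneg⟩ (s*u) (hmapsg u hu)
    rw [hg0] at this
    rw [this, abs_of_nonpos (by nlinarith [hu.1]), neg_sub, sub_zero]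
  have : s * u = t := by rw [← hdx, ← hgu, hdy]
  rw [← hgu, this]

lemma geo_gromov {T : Type*} [MetricSpace T] {seg : T → T → Set T}
    (htree : IsRealTree seg) (ρ x y : T) (f g : ℝ → T)
    (hf0 : f 0 = ρ) (hfx : f (dist ρ x) = x)
    (hfi : ∀ s ∈ Set.Icc (0:ℝ) (dist ρ x), ∀ t ∈ Set.Icc (0:ℝ) (dist ρ x),
      dist (f s) (f t) = |s - t|)
    (hg0 : g 0 = ρ) (hgy : g (dist ρ y) = y)
    (hgi : ∀ s ∈ Set.Icc (0:ℝ) (dist ρ y), ∀ t ∈ Set.Icc (0:ℝ) (dist ρ y),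
      dist (g s) (g t) = |s - t|)
    {t : ℝ} (ht0 : 0 ≤ t) (ht : t ≤ (dist ρ x + dist ρ y - dist x y) / 2) :
    f t = g t := by
  set dx := dist ρ x with hdx
  set dy := dist ρ y with hdy
  set dxy := dist x y with hdxy
  set p := (dx + dy - dxy) / 2 with hp
  have hdx0 : 0 ≤ dx := dist_nonneg
  have hdy0 : 0 ≤ dy := dist_nonneg
  have hpdx : p ≤ dx := by
    have : dy ≤ dx + dxy := by
      rw [hdx, hdy, hdxy]; exact (dist_triangle ρ x y)
    rw [hp]; linarith
  have hpdy : p ≤ dy := by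
    have : dx ≤ dy + dxy := by
      rw [hdx, hdy, hdxy, dist_comm x y]; exact (dist_triangle ρ y x)
    rw [hp]; linarith
  -- dist to root along parametrizations
  have hdf : ∀ r ∈ Icc (0:ℝ) dx, dist ρ (f r) = r := by
    intro r hr
    have := hfi 0 ⟨le_refl 0, hdx0⟩ r hr
    rw [hf0] at this
    rw [this, abs_of_nonpos (by linarith [hr.1]), neg_sub, sub_zero]
  have hdg : ∀ r ∈ Icc (0:ℝ) dy, dist ρ (g r) = r := by
    intro r hr
    have := hgi 0 ⟨le_refl 0, hdy0⟩ r hr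
    rw [hg0] at this
    rw [this, abs_of_nonpos (by linarith [hr.1]), neg_sub, sub_zero]
  -- the coincidence set and its sup
  set E : Set ℝ := {r | r ∈ Icc (0:ℝ) (min dx dy) ∧ f r = g r} with hE
  have h0E : (0:ℝ) ∈ E := ⟨⟨le_refl 0, le_min hdx0 hdy0⟩, by rw [hf0, hg0]⟩
  have hEne : E.Nonempty := ⟨0, h0E⟩
  have hEbdd : BddAbove E := ⟨min dx dy, fun r hr => hr.1.2⟩
  set ts := sSup E with hts
  have hts0 : 0 ≤ ts := le_csSup hEbdd h0E
  have htsm : ts ≤ min dx dy := csSup_le hEne fun r hr => hr.1.2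
  have htsx : ts ≤ dx := htsm.trans (min_le_left _ _)
  have htsy : ts ≤ dy := htsm.trans (min_le_right _ _)
  have hfc := iso_cont hfi
  have hgc := iso_cont hgi
  have hmem : f ts = g ts := by
    obtain ⟨u, -, hlim, humem⟩ := exists_seq_tendsto_sSup hEne hEbdd
    have h1 : Filter.Tendsto (fun n => f (u n)) Filter.atTop (nhds (f ts)) := by
      refine ((hfc.continuousWithinAt ⟨hts0, htsx⟩).tendsto).comp ?_
      refine tendsto_nhdsWithin_of_tendsto_nhds_of_eventually_within _ hlim ?_
      exact Filter.Eventually.of_forall fun n =>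
        ⟨(humem n).1.1, (humem n).1.2.trans (min_le_left _ _)⟩
    have h2 : Filter.Tendsto (fun n => g (u n)) Filter.atTop (nhds (g ts)) := by
      refine ((hgc.continuousWithinAt ⟨hts0, htsy⟩).tendsto).comp ?_
      refine tendsto_nhdsWithin_of_tendsto_nhds_of_eventually_within _ hlim ?_
      exact Filter.Eventually.of_forall fun n =>
        ⟨(humem n).1.1, (humem n).1.2.trans (min_le_right _ _)⟩
    have : (fun n => f (u n)) = fun n => g (u n) := funext fun n => (humem n).2
    rw [this] at h1
    exact tendsto_nhds_unique h1 h2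
  have hcoin : ∀ r, 0 ≤ r → r ≤ ts → f r = g r :=
    fun r hr0 hr => geo_coincide htree ρ x y f g hf0 hfi hg0 hgi hts0 htsx htsy hmem hr0 hr
  -- main claim : p ≤ ts
  have hclaim : p ≤ ts := by
    by_contra hcon
    push_neg at hcon
    set Lx := dx - ts with hLx
    set Ly := dy - ts with hLy
    set L := Lx + Ly with hL
    have hLx0 : 0 < Lx := by rw [hLx]; linarith
    have hLy0 : 0 < Ly := by rw [hLy]; linarith
    have hL0 : 0 < L := by rw [hL]; linarith
    set F : ℝ → T := fun r => f (max 0 (min dx r)) with hF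
    set G : ℝ → T := fun r => g (max 0 (min dy r)) with hG
    have hclampx : ∀ r, max 0 (min dx r) ∈ Icc (0:ℝ) dx :=
      fun r => ⟨le_max_left _ _, max_le hdx0 (min_le_left _ _)⟩
    have hclampy : ∀ r, max 0 (min dy r) ∈ Icc (0:ℝ) dy :=
      fun r => ⟨le_max_left _ _, max_le hdy0 (min_le_left _ _)⟩
    have hFeq : ∀ r ∈ Icc (0:ℝ) dx, F r = f r := by
      intro r hr
      rw [hF]
      simp only
      rw [min_eq_right hr.2, max_eq_right hr.1]
    have hGeq : ∀ r ∈ Icc (0:ℝ) dy, G r = g r := by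
      intro r hr
      rw [hG]
      simp only
      rw [min_eq_right hr.2, max_eq_right hr.1]
    have hFc : Continuous F := hfc.comp_continuous (by fun_prop) hclampx
    have hGc : Continuous G := hgc.comp_continuous (by fun_prop) hclampy
    set q : ℝ → T := fun u => if L * u ≤ Lx then F (dx - L * u) else G (L * u - Lx + ts)
      with hq
    have hqc : Continuous q := by
      rw [hq]
      refine Continuous.if_le (hFc.comp (by fun_prop)) (hGc.comp (by fun_prop))
        (by fun_prop) continuous_const ?_
      intro u hu
      have e1 : dx - L * u = ts := by rw [hu]; rw [hLx]; ring
      have e2 : L * u - Lx + ts = ts := by rw [hu]; ring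
      show F (dx - L * u) = G (L * u - Lx + ts)
      rw [e1, e2, hFeq ts ⟨hts0, htsx⟩, hGeq ts ⟨hts0, htsy⟩, hmem]
    have harg1 : ∀ u : ℝ, 0 ≤ u → L * u ≤ Lx → dx - L * u ∈ Icc ts dx := by
      intro u hu hLu
      constructor
      · rw [hLx] at hLu; linarith
      · nlinarith
    have harg2 : ∀ u : ℝ, u ≤ 1 → Lx < L * u → L * u - Lx + ts ∈ Ioc ts dy := by
      intro u hu hLu
      constructor
      · linarith
      · have : L * u ≤ L := by nlinarith
        rw [hLy] at *; rw [hL] at this ⊢; rw [hLx] at this ⊢; linarith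
    have hval1 : ∀ u : ℝ, 0 ≤ u → L * u ≤ Lx → q u = f (dx - L * u) := by
      intro u hu hLu
      rw [hq]
      simp only [if_pos hLu]
      exact hFeq _ ⟨(harg1 u hu hLu).1.trans' hts0, (harg1 u hu hLu).2⟩
    have hval2 : ∀ u : ℝ, u ≤ 1 → Lx < L * u → q u = g (L * u - Lx + ts) := by
      intro u hu hLu
      rw [hq]
      simp only [if_neg (not_le.mpr hLu)]
      exact hGeq _ ⟨hts0.trans (harg2 u hu hLu).1.le, (harg2 u hu hLu).2⟩
    have hq0 : q 0 = x := by
      have := hval1 0 le_rfl (by rw [mul_zero]; exact hLx0.le)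
      rw [this, mul_zero, sub_zero, hfx]
    have hq1 : q 1 = y := by
      have h1 : Lx < L * 1 := by rw [mul_one, hL]; linarith
      rw [hval2 1 le_rfl h1, mul_one]
      have : L - Lx + ts = dy := by rw [hL, hLy]; ring
      rw [this, hgy]
    have hinj : Set.InjOn q (Icc 0 1) := by
      intro u hu v hv huv
      have hmixed : ∀ w z : ℝ, 0 ≤ w → z ≤ 1 → L * w ≤ Lx → Lx < L * z →
          q w ≠ q z := by
        intro w z hw hz h1 h2 heq
        have hargw := harg1 w hw h1
        have hargz := harg2 z hz h2
        rw [hval1 w hw h1, hval2 z hz h2] at heq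
        have e1 : dist ρ (f (dx - L * w)) = dx - L * w :=
          hdf _ ⟨hts0.trans hargw.1, hargw.2⟩
        have e2 : dist ρ (g (L * z - Lx + ts)) = L * z - Lx + ts :=
          hdg _ ⟨hts0.trans hargz.1.le, hargz.2⟩
        rw [heq] at e1
        have heqarg : dx - L * w = L * z - Lx + ts := by rw [← e1, e2]
        rw [heqarg] at heq
        have hinE : (L * z - Lx + ts) ∈ E := by
          refine ⟨⟨hts0.trans hargz.1.le, le_min (by rw [← heqarg]; exact hargw.2) hargz.2⟩, heq⟩
        have := le_csSup hEbdd hinE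
        rw [← hts] at this
        exact absurd this (not_le.mpr hargz.1)
      rcases le_or_gt (L * u) Lx with h1 | h1 <;> rcases le_or_gt (L * v) Lx with h2 | h2
      · rw [hval1 u hu.1 h1, hval1 v hv.1 h2] at huv
        have hau := harg1 u hu.1 h1
        have hav := harg1 v hv.1 h2
        have := hfi _ ⟨hts0.trans hau.1, hau.2⟩ _ ⟨hts0.trans hav.1, hav.2⟩
        rw [huv, dist_self] at this
        have : dx - L * u = dx - L * v := by
          have := abs_eq_zero.mp this.symm; linarith
        have : L * u = L * v := by linarith
        exact mul_left_cancel₀ hL0.ne' this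
      · exact absurd huv (hmixed u v hu.1 hv.2 h1 h2)
      · exact absurd huv.symm (hmixed v u hv.1 hu.2 h2 h1)
      · rw [hval2 u hu.2 h1, hval2 v hv.2 h2] at huv
        have hau := harg2 u hu.2 h1
        have hav := harg2 v hv.2 h2
        have := hgi _ ⟨hts0.trans hau.1.le, hau.2⟩ _ ⟨hts0.trans hav.1.le, hav.2⟩
        rw [huv, dist_self] at this
        have : L * u - Lx + ts = L * v - Lx + ts := by
          have := abs_eq_zero.mp this.symm; linarith
        have : L * u = L * v := by linarith
        exact mul_left_cancel₀ hL0.ne' this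
    have himg := htree.unique_arc x y q hqc.continuousOn hinj hq0 hq1
    obtain ⟨hh, hh0, hhxy, hhi, hhseg⟩ := htree.geodesic x y
    have hfts : f ts ∈ q '' Icc (0:ℝ) 1 := by
      refine ⟨Lx / L, ⟨div_nonneg hLx0.le hL0.le, ?_⟩, ?_⟩
      · rw [div_le_one hL0, hL]; linarith
      · have he : L * (Lx / L) = Lx := by field_simp
        rw [hval1 _ (div_nonneg hLx0.le hL0.le) (by rw [he]), he]
        congr 1
        rw [hLx]; ring
      --
    rw [himg, hhseg] at hfts
    obtain ⟨sx, hsx, hhs⟩ := hfts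
    have d1 : dist x (f ts) = dx - ts := by
      rw [← hfx]
      rw [hfi dx ⟨hdx0, le_refl dx⟩ ts ⟨hts0, htsx⟩]
      rw [abs_of_nonneg (by linarith)]
    have d2 : dist (f ts) y = dy - ts := by
      rw [hmem, ← hgy]
      rw [hgi ts ⟨hts0, htsy⟩ dy ⟨hdy0, le_refl dy⟩]
      rw [abs_of_nonpos (by linarith), neg_sub]
    have d1' : dist x (f ts) = sx := by
      rw [← hhs, ← hh0]
      rw [hhi 0 ⟨le_refl 0, dist_nonneg⟩ sx hsx]
      rw [abs_of_nonpos (by linarith [hsx.1]), neg_sub, sub_zero]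
    have d2' : dist (f ts) y = dxy - sx := by
      rw [← hhs, ← hhxy]
      rw [hhi sx hsx dxy ⟨dist_nonneg, le_refl _⟩]
      rw [abs_of_nonpos (by linarith [hsx.2]), neg_sub]
    have : ts = p := by
      rw [hp]
      have e1 : dx - ts = sx := by rw [← d1, d1']
      have e2 : dy - ts = dxy - sx := by rw [← d2, d2']
      linarith
    linarith
  exact hcoin t ht0 (ht.trans hclaim)

lemma sphere_ultra_core {T : Type*} [MetricSpace T] {seg : T → T → Set T}
    (htree : IsRealTree seg) (ρ : T) {a : ℝ} {x y z : T}
    (hx : dist ρ x = a) (hy : dist ρ y = a) (hz : dist ρ z = a)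
    (hle : dist z y ≤ dist x z) : dist x y ≤ dist x z := by
  obtain ⟨fx, hfx0, hfxx, hfxi, -⟩ := htree.geodesic ρ x
  obtain ⟨fy, hfy0, hfyy, hfyi, -⟩ := htree.geodesic ρ y
  obtain ⟨fz, hfz0, hfzz, hfzi, -⟩ := htree.geodesic ρ z
  set t1 := (a + a - dist x z) / 2 with ht1
  have htri : dist x z ≤ a + a := by
    calc dist x z ≤ dist x ρ + dist ρ z := dist_triangle _ _ _
      _ = a + a := by rw [dist_comm x ρ, hx, hz]
  have ht10 : 0 ≤ t1 := by rw [ht1]; linarith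
  have ht1a : t1 ≤ a := by rw [ht1]; linarith [dist_nonneg (x := x) (y := z)]
  have h1 : fx t1 = fz t1 := by
    refine geo_gromov htree ρ x z fx fz hfx0 hfxx hfxi hfz0 hfzz hfzi ht10 ?_
    rw [hx, hz]
  have h2 : fz t1 = fy t1 := by
    refine geo_gromov htree ρ z y fz fy hfz0 hfzz hfzi hfy0 hfyy hfyi ht10 ?_
    rw [hz, hy, ht1]
    linarith
  have d1 : dist x (fx t1) = a - t1 := by
    rw [← hfxx, hfxi (dist ρ x) ⟨dist_nonneg, le_refl _⟩ t1 (by rw [hx]; exact ⟨ht10, ht1a⟩)]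
    rw [hx, abs_of_nonneg (by linarith)]
  have d2 : dist (fy t1) y = a - t1 := by
    rw [← hfyy, hfyi t1 (by rw [hy]; exact ⟨ht10, ht1a⟩) (dist ρ y) ⟨dist_nonneg, le_refl _⟩]
    rw [hy, abs_of_nonpos (by linarith), neg_sub]
  calc dist x y ≤ dist x (fx t1) + dist (fx t1) y := dist_triangle _ _ _
    _ = (a - t1) + (a - t1) := by rw [d1, h1, h2, d2]
    _ = dist x z := by rw [ht1]; ring

lemma sphere_ultra {T : Type*} [MetricSpace T] {seg : T → T → Set T}
    (htree : IsRealTree seg) (ρ : T) {a : ℝ} {x y z : T}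
    (hx : dist ρ x = a) (hy : dist ρ y = a) (hz : dist ρ z = a) :
    dist x y ≤ max (dist x z) (dist z y) := by
  rcases le_total (dist z y) (dist x z) with hc | hc
  · exact le_max_of_le_left (sphere_ultra_core htree ρ hx hy hz hc)
  · refine le_max_of_le_right ?_
    rw [dist_comm x y, dist_comm z y]
    rw [dist_comm z y, dist_comm x z] at hc
    exact sphere_ultra_core htree ρ hy hx hz hc

open MeasureTheory Filter
open scoped ENNReal

/-- lower comparison lemma on level sets of real trees: if `μ` is a finite
Borel measure on a compact rooted real tree carried by the level set `T(a)` (i.e.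
`μ(T \ T(a)) = 0`), `T(a) ≠ ∅`, `g` an increasing continuous gauge with `g 0 = 0`,
`A ⊆ T(a)` Borel, `c ∈ (0,∞)`, and `limsup_{r→0} μ(B(σ,r))/g(r) > c` for every `σ ∈ A`,
then `μ(A) ≥ c · H_g(A)` (with no multiplicative correction constant). -/
theorem stmt7 {T : Type*} [MetricSpace T] [CompactSpace T]
    [MeasurableSpace T] [BorelSpace T]
    (seg : T → T → Set T) (htree : IsRealTree seg) (ρ : T)
    (a : ℝ) (ha : 0 < a) (hne : {τ : T | dist ρ τ = a}.Nonempty)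
    (g : ℝ≥0∞ → ℝ≥0∞) (hg0 : g 0 = 0) (hgmono : Monotone g) (hgcont : Continuous g)
    (μ : Measure T) [IsFiniteMeasure μ]
    (hcarried : μ {τ : T | dist ρ τ = a}ᶜ = 0)
    (A : Set T) (hA : MeasurableSet A) (hAsub : A ⊆ {τ : T | dist ρ τ = a})
    (c : ℝ≥0∞) (hc0 : 0 < c) (hctop : c ≠ ⊤)
    (h : ∀ σ ∈ A,
      c < limsup (fun r : ℝ => μ (Metric.ball σ r) / g (ENNReal.ofReal r))
        (nhdsWithin 0 (Set.Ioi 0))) :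
    c * Measure.mkMetric g A ≤ μ A := by
  classical
  set S := {τ : T | dist ρ τ = a} with hS
  have hSclosed : IsClosed S := isClosed_eq (by fun_prop) continuous_const
  have hSmeas : MeasurableSet S := hSclosed.measurableSet
  have hμS : ∀ E : Set T, μ (E ∩ S) = μ E := by
    intro E
    refine le_antisymm (measure_mono Set.inter_subset_left) ?_
    calc μ E ≤ μ (E ∩ S) + μ (E ∩ Sᶜ) := by
          rw [← Set.inter_union_compl E S]
          exact (measure_union_le _ _).trans (by rw [Set.inter_union_compl])
      _ ≤ μ (E ∩ S) + μ Sᶜ := add_le_add_right (measure_mono Set.inter_subset_right) _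
      _ = μ (E ∩ S) := by rw [hcarried, add_zero]
  have hum : ∀ x ∈ S, ∀ y ∈ S, ∀ z ∈ S, dist x y ≤ max (dist x z) (dist z y) :=
    fun x hx y hy z hz => sphere_ultra htree ρ hx hy hz
  have hμA_ne : μ A ≠ ∞ := measure_ne_top μ A
  refine ENNReal.le_of_forall_pos_le_add fun ε hε _ => ?_
  -- outer regular approximation
  obtain ⟨U, hAU, hUopen, hμU⟩ :=
    Set.exists_isOpen_lt_add A hμA_ne (ε := (ε : ℝ≥0∞)) (by exact_mod_cast hε.ne')
  suffices hmk : Measure.mkMetric g A ≤ (μ A + ε) / c by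
    calc c * Measure.mkMetric g A ≤ c * ((μ A + ε) / c) := mul_le_mul_right hmk c
      _ ≤ μ A + ε := ENNReal.mul_div_le
  have hcoe : Measure.mkMetric g A
      = OuterMeasure.mkMetric' (fun s : Set T => g (EMetric.diam s)) A := by
    rw [← MeasureTheory.OuterMeasure.coe_mkMetric]; rfl
  rw [hcoe]
  refine le_of_tendsto (MeasureTheory.OuterMeasure.mkMetric'.tendsto_pre _ A) ?_
  filter_upwards [self_mem_nhdsWithin] with r0 hr0
  -- choose a real scale δ with ofReal δ ≤ r0
  obtain ⟨δ, hδ0, hδr⟩ : ∃ δ : ℝ, 0 < δ ∧ ENNReal.ofReal δ ≤ r0 := by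
    refine ⟨(min r0 1).toReal, ?_, ?_⟩
    · refine ENNReal.toReal_pos ?_ ?_
      · simp only [ne_eq, min_eq_iff]
        push_neg
        exact ⟨fun h1 => absurd h1 (ne_of_gt hr0), fun h1 => absurd h1 one_ne_zero⟩
      · exact ne_top_of_le_ne_top ENNReal.one_ne_top (min_le_right _ _)
    · rw [ENNReal.ofReal_toReal (ne_top_of_le_ne_top ENNReal.one_ne_top (min_le_right _ _))]
      exact min_le_left _ _
  set Rad : T → Set ℝ := fun σ => {r | 0 < r ∧ r < δ ∧ Metric.ball σ r ⊆ U ∧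
    c * g (ENNReal.ofReal r) ≤ μ (Metric.ball σ r)} with hRadDef
  have hRad : ∀ σ ∈ A, (Rad σ).Nonempty := by
    intro σ hσ
    have hfreq := Filter.frequently_lt_of_lt_limsup (h := h σ hσ)
    obtain ⟨η1, hη1, hballU⟩ := Metric.isOpen_iff.mp hUopen σ (hAU hσ)
    have hIoo : Set.Ioo (0:ℝ) (min δ η1) ∈ nhdsWithin 0 (Set.Ioi 0) :=
      Ioo_mem_nhdsGT_of_mem ⟨le_refl 0, lt_min hδ0 hη1⟩
    obtain ⟨r, hrlt, hrIoo⟩ :=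
      (hfreq.and_eventually (eventually_of_mem hIoo fun x hx => hx)).exists
    refine ⟨r, hrIoo.1, lt_of_lt_of_le hrIoo.2 (min_le_left _ _), ?_, ?_⟩
    · exact (Metric.ball_subset_ball (le_of_lt (lt_of_lt_of_le hrIoo.2 (min_le_right _ _)))).trans
        hballU
    · exact ENNReal.mul_le_of_le_div hrlt.le
  set Rs : T → Set ℝ := fun σ => {r | ∃ τ ∈ A, r ∈ Rad τ ∧ σ ∈ Metric.ball τ r} with hRsDef
  have hRsne : ∀ σ ∈ A, (Rs σ).Nonempty := by
    intro σ hσ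
    obtain ⟨r, hr⟩ := hRad σ hσ
    exact ⟨r, σ, hσ, hr, Metric.mem_ball_self hr.1⟩
  have hRsbdd : ∀ σ, BddAbove (Rs σ) := by
    intro σ
    exact ⟨δ, fun r hr => by obtain ⟨τ, hτ, hrRad, -⟩ := hr; exact hrRad.2.1.le⟩
  set R : T → ℝ := fun σ => sSup (Rs σ) with hRDef
  have hR0 : ∀ σ ∈ A, 0 < R σ := by
    intro σ hσ
    obtain ⟨r, hr⟩ := hRsne σ hσ
    have h1 : 0 < r := by obtain ⟨τ, hτ, hrRad, -⟩ := hr; exact hrRad.1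
    exact lt_of_lt_of_le h1 (le_csSup (hRsbdd σ) hr)
  have hRδ : ∀ σ ∈ A, R σ ≤ δ := by
    intro σ hσ
    refine csSup_le (hRsne σ hσ) fun r hr => ?_
    obtain ⟨τ, hτ, hrRad, -⟩ := hr; exact hrRad.2.1.le
  set Vc : T → Set T := fun σ => Metric.ball σ (R σ) ∩ S with hVcDef
  -- recentering
  have hrec : ∀ σ ∈ S, ∀ τ ∈ S, ∀ r : ℝ, σ ∈ Metric.ball τ r →
      Metric.ball τ r ∩ S = Metric.ball σ r ∩ S := by
    intro σ hσ τ hτ r hmem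
    rw [Metric.mem_ball] at hmem
    ext x
    simp only [Set.mem_inter_iff, Metric.mem_ball, and_congr_left_iff]
    intro hx
    constructor
    · intro h1
      calc dist x σ ≤ max (dist x τ) (dist τ σ) := hum x hx σ hσ τ hτ
        _ < r := max_lt h1 (by rw [dist_comm]; exact hmem)
    · intro h1
      calc dist x τ ≤ max (dist x σ) (dist σ τ) := hum x hx τ hτ σ hσ
        _ < r := max_lt h1 hmem
  -- consequences of u ∈ Rs σ
  have hRsprop : ∀ σ ∈ A, ∀ u ∈ Rs σ,
      (Metric.ball σ u ∩ S ⊆ U) ∧ c * g (ENNReal.ofReal u) ≤ μ (Metric.ball σ u ∩ S) := by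
    intro σ hσ u hu
    obtain ⟨τ, hτ, huRad, hmem⟩ := hu
    have heq : Metric.ball τ u ∩ S = Metric.ball σ u ∩ S :=
      hrec σ (hAsub hσ) τ (hAsub hτ) u hmem
    constructor
    · rw [← heq]; exact Set.inter_subset_left.trans huRad.2.2.1
    · rw [← heq, hμS]; exact huRad.2.2.2
  have hsubV : ∀ σ ∈ A, ∀ u ∈ Rs σ, Metric.ball σ u ∩ S ⊆ Vc σ := by
    intro σ hσ u hu
    exact Set.inter_subset_inter_left _
      (Metric.ball_subset_ball (le_csSup (hRsbdd σ) hu))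
  have hVsubU : ∀ σ ∈ A, Vc σ ⊆ U := by
    intro σ hσ x hx
    obtain ⟨hxb, hxS⟩ := hx
    rw [Metric.mem_ball] at hxb
    obtain ⟨u, hu, hxu⟩ := exists_lt_of_lt_csSup (hRsne σ hσ) hxb
    exact (hRsprop σ hσ u hu).1 ⟨Metric.mem_ball.mpr hxu, hxS⟩
  have hVmeas : ∀ σ, MeasurableSet (Vc σ) :=
    fun σ => Metric.isOpen_ball.measurableSet.inter hSmeas
  have hVdiam : ∀ σ ∈ A, EMetric.diam (Vc σ) ≤ ENNReal.ofReal (R σ) := by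
    intro σ hσ
    refine EMetric.diam_le fun x hx y hy => ?_
    obtain ⟨hxb, hxS⟩ := hx
    obtain ⟨hyb, hyS⟩ := hy
    rw [Metric.mem_ball] at hxb hyb
    rw [edist_dist]
    refine ENNReal.ofReal_le_ofReal ?_
    calc dist x y ≤ max (dist x σ) (dist σ y) := hum x hxS y hyS σ (hAsub hσ)
      _ ≤ R σ := max_le hxb.le (by rw [dist_comm]; exact hyb.le)
  have hVμ : ∀ σ ∈ A, c * g (ENNReal.ofReal (R σ)) ≤ μ (Vc σ) := by
    intro σ hσ
    obtain ⟨u, -, hlim, humem⟩ := exists_seq_tendsto_sSup (hRsne σ hσ) (hRsbdd σ)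
    have hbd : ∀ n, c * g (ENNReal.ofReal (u n)) ≤ μ (Vc σ) := by
      intro n
      exact ((hRsprop σ hσ (u n) (humem n)).2).trans
        (measure_mono (hsubV σ hσ (u n) (humem n)))
    have htd : Filter.Tendsto (fun n => c * g (ENNReal.ofReal (u n))) Filter.atTop
        (nhds (c * g (ENNReal.ofReal (R σ)))) := by
      refine ENNReal.Tendsto.const_mul ?_ (Or.inr hctop)
      exact (hgcont.tendsto _).comp (ENNReal.tendsto_ofReal hlim)
    exact le_of_tendsto htd (Filter.Eventually.of_forall hbd)
  have hclass : ∀ σ ∈ A, c * g (EMetric.diam (Vc σ)) ≤ μ (Vc σ) :=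
    fun σ hσ => (mul_le_mul_right (hgmono (hVdiam σ hσ)) c).trans (hVμ σ hσ)
  -- dichotomy
  have hnd : ∀ σ ∈ A, ∀ τ ∈ A, ¬Disjoint (Vc σ) (Vc τ) →
      ∃ m, dist σ τ < m ∧ m ∈ Rs σ ∧ m ∈ Rs τ := by
    intro σ hσ τ hτ hndisj
    obtain ⟨x, hxσ, hxτ⟩ := Set.not_disjoint_iff.mp hndisj
    obtain ⟨hxbσ, hxS⟩ := hxσ
    obtain ⟨hxbτ, -⟩ := hxτ
    rw [Metric.mem_ball] at hxbσ hxbτ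
    obtain ⟨r, hr, hxr⟩ := exists_lt_of_lt_csSup (hRsne σ hσ) hxbσ
    obtain ⟨s, hs, hxs⟩ := exists_lt_of_lt_csSup (hRsne τ hτ) hxbτ
    have hdστ : dist σ τ < max r s := by
      calc dist σ τ ≤ max (dist σ x) (dist x τ) := hum σ (hAsub hσ) τ (hAsub hτ) x hxS
        _ < max r s := by
            refine max_lt ?_ ?_
            · exact lt_max_of_lt_left (by rw [dist_comm]; exact hxr)
            · exact lt_max_of_lt_right hxs
    have htransfer : ∀ p ∈ A, ∀ q ∈ A, ∀ u, u ∈ Rs q → dist p q < u → u ∈ Rs p := by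
      intro p hp q hq u hu hpq
      obtain ⟨τ', hτ', huRad, hmem⟩ := hu
      rw [Metric.mem_ball] at hmem
      refine ⟨τ', hτ', huRad, Metric.mem_ball.mpr ?_⟩
      calc dist p τ' ≤ max (dist p q) (dist q τ') :=
            hum p (hAsub hp) τ' (hAsub hτ') q (hAsub hq)
        _ < u := max_lt hpq hmem
    rcases le_total r s with hrs | hrs
    · rw [max_eq_right hrs] at hdστ
      exact ⟨s, hdστ, htransfer σ hσ τ hτ s hs hdστ, hs⟩
    · rw [max_eq_left hrs] at hdστ
      refine ⟨r, hdστ, hr, htransfer τ hτ σ hσ r hr (by rw [dist_comm]; exact hdστ)⟩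
  have hdicho : ∀ σ ∈ A, ∀ τ ∈ A, Vc σ = Vc τ ∨ Disjoint (Vc σ) (Vc τ) := by
    intro σ hσ τ hτ
    rw [or_iff_not_imp_right]
    intro hndisj
    obtain ⟨m, hdm, hmσ, hmτ⟩ := hnd σ hσ τ hτ hndisj
    have htransfer : ∀ p ∈ A, ∀ q ∈ A, ∀ u, u ∈ Rs q → dist p q < u → u ∈ Rs p := by
      intro p hp q hq u hu hpq
      obtain ⟨τ', hτ', huRad, hmem⟩ := hu
      rw [Metric.mem_ball] at hmem
      refine ⟨τ', hτ', huRad, Metric.mem_ball.mpr ?_⟩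
      calc dist p τ' ≤ max (dist p q) (dist q τ') :=
            hum p (hAsub hp) τ' (hAsub hτ') q (hAsub hq)
        _ < u := max_lt hpq hmem
    have hRle : ∀ p ∈ A, ∀ q ∈ A, dist p q < R q → R q ≤ R p := by
      intro p hp q hq hd
      refine le_of_forall_lt fun v hv => ?_
      obtain ⟨u, hu, hvu⟩ := exists_lt_of_lt_csSup (hRsne q hq) (max_lt hv hd)
      have := htransfer p hp q hq u hu ((le_max_right _ _).trans_lt hvu)
      exact lt_of_lt_of_le ((le_max_left _ _).trans_lt hvu) (le_csSup (hRsbdd p) this)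
    have hdmσ : dist σ τ < R σ := lt_of_lt_of_le hdm (le_csSup (hRsbdd σ) hmσ)
    have hdmτ : dist σ τ < R τ := lt_of_lt_of_le hdm (le_csSup (hRsbdd τ) hmτ)
    have hReq : R σ = R τ := le_antisymm
      (hRle τ hτ σ hσ (by rw [dist_comm]; exact hdmσ)) (hRle σ hσ τ hτ hdmτ)
    ext x
    simp only [hVcDef, Set.mem_inter_iff, Metric.mem_ball, and_congr_left_iff]
    intro hx
    constructor
    · intro h1
      rw [← hReq]
      calc dist x τ ≤ max (dist x σ) (dist σ τ) := hum x hx τ (hAsub hτ) σ (hAsub hσ)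
        _ < R σ := max_lt h1 hdmσ
    · intro h1
      calc dist x σ ≤ max (dist x τ) (dist τ σ) := hum x hx σ (hAsub hσ) τ (hAsub hτ)
        _ < R σ := max_lt (hReq ▸ h1) (by rw [dist_comm]; exact hdmσ)
  -- the countable family of classes
  set 𝒞 : Set (Set T) := Vc '' A with h𝒞
  have hcount : 𝒞.Countable := by
    refine Set.PairwiseDisjoint.countable_of_isOpen (α := ↥S)
      (s := fun C : Set T => (Subtype.val ⁻¹' C : Set ↥S)) (a := 𝒞) ?_ ?_ ?_
    · intro C1 h1 C2 h2 hne12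
      obtain ⟨σ1, hσ1, rfl⟩ := h1
      obtain ⟨σ2, hσ2, rfl⟩ := h2
      rcases hdicho σ1 hσ1 σ2 hσ2 with heq | hdisj
      · exact absurd heq hne12
      · exact Disjoint.preimage _ hdisj
    · rintro C ⟨σ, hσ, rfl⟩
      show IsOpen (Subtype.val ⁻¹' (Vc σ) : Set ↥S)
      have : (Subtype.val ⁻¹' (Vc σ) : Set ↥S) = Subtype.val ⁻¹' (Metric.ball σ (R σ)) := by
        ext x
        simp only [Set.mem_preimage, hVcDef, Set.mem_inter_iff, and_iff_left_iff_imp]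
        exact fun _ => x.2
      rw [this]
      exact Metric.isOpen_ball.preimage continuous_subtype_val
    · rintro C ⟨σ, hσ, rfl⟩
      exact ⟨⟨σ, hAsub hσ⟩, show (σ:T) ∈ Vc σ from ⟨Metric.mem_ball_self (hR0 σ hσ), hAsub hσ⟩⟩
  have hCprop : ∀ C ∈ 𝒞, EMetric.diam C ≤ r0 ∧ c * g (EMetric.diam C) ≤ μ C ∧
      MeasurableSet C ∧ C ⊆ U := by
    rintro C ⟨σ, hσ, rfl⟩
    refine ⟨(hVdiam σ hσ).trans ((ENNReal.ofReal_le_ofReal (hRδ σ hσ)).trans hδr),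
      hclass σ hσ, hVmeas σ, hVsubU σ hσ⟩
  have hcover : A ⊆ ⋃₀ 𝒞 := fun σ hσ =>
    ⟨Vc σ, ⟨σ, hσ, rfl⟩, Metric.mem_ball_self (hR0 σ hσ), hAsub hσ⟩
  -- assemble the estimate
  have hpairwise : 𝒞.Pairwise Disjoint := by
    rintro C1 h1 C2 h2 hne12
    obtain ⟨σ1, hσ1, rfl⟩ := h1
    obtain ⟨σ2, hσ2, rfl⟩ := h2
    rcases hdicho σ1 hσ1 σ2 hσ2 with heq | hdisj
    · exact absurd heq hne12
    · exact hdisj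
  have hsum : μ (⋃₀ 𝒞) = ∑' C : 𝒞, μ (C : Set T) :=
    measure_sUnion hcount hpairwise fun C hC => (hCprop C hC).2.2.1
  have hμUbound : ∑' C : 𝒞, μ (C : Set T) ≤ μ A + ε := by
    rw [← hsum]
    refine (measure_mono ?_).trans hμU.le
    exact Set.sUnion_subset fun C hC => (hCprop C hC).2.2.2
  have hpre : OuterMeasure.mkMetric'.pre (fun s : Set T => g (EMetric.diam s)) r0 A
      ≤ ∑' C : 𝒞, g (EMetric.diam (C : Set T)) := by
    calc OuterMeasure.mkMetric'.pre (fun s : Set T => g (EMetric.diam s)) r0 A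
        ≤ OuterMeasure.mkMetric'.pre (fun s : Set T => g (EMetric.diam s)) r0 (⋃₀ 𝒞) :=
          measure_mono hcover
      _ = OuterMeasure.mkMetric'.pre (fun s : Set T => g (EMetric.diam s)) r0
            (⋃ C ∈ 𝒞, C) := by rw [Set.sUnion_eq_biUnion]
      _ ≤ ∑' C : 𝒞, OuterMeasure.mkMetric'.pre (fun s : Set T => g (EMetric.diam s)) r0
            (C : Set T) := measure_biUnion_le _ hcount _
      _ ≤ ∑' C : 𝒞, g (EMetric.diam (C : Set T)) := by
          refine ENNReal.tsum_le_tsum fun C => ?_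
          exact OuterMeasure.mkMetric'.pre_le (hCprop C C.2).1
  refine hpre.trans ?_
  rw [ENNReal.le_div_iff_mul_le (Or.inl hc0.ne') (Or.inl hctop)]
  calc (∑' C : 𝒞, g (EMetric.diam (C : Set T))) * c
      = ∑' C : 𝒞, c * g (EMetric.diam (C : Set T)) := by
        rw [← ENNReal.tsum_mul_right]
        congr 1
        ext C
        rw [mul_comm]
    _ ≤ ∑' C : 𝒞, μ (C : Set T) := ENNReal.tsum_le_tsum fun C => (hCprop C C.2).2.1
    _ ≤ μ A + ε := hμUbound
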